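/- Let Ω ⊂ ℝⁿ be a bounded open set with Dirichlet Laplacian eigenvalues λ₁ < λ₂ ≤ ⋯ (λ₁ simple) and orthonormal eigenbasis (φ_{n,k}). Let ω ⊂ Ω and suppose a function of the form u(t,x) = Σ_{n,k} a_{n,k} e^{−λ_n t} φ_{n,k}(x) (with Σ|a_{n,k}|² < ∞) satisfies u(t,·)|_ω = 0 for all t > 0. If for each n the combination Σ_k a_{n,k} φ_{n,k} vanishing identically on ω implies Σ_k a_{n,k} φ_{n,k} = 0 (i.e. no nonzero eigenfunction vanishes identically on ω), then all a_{n,k} = 0, hence u ≡ 0. -/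

import Mathlib

open Set Filter

/-- The key step for approximate observability: if a heat solution
`u(t,x) = ∑_{n,k} a_{n,k} e^{-λ_n t} φ_{n,k}(x)` (square-summable coefficients,
eigenvalues `λ₀ < λ₁ < ⋯ → ∞` with the first eigenvalue simple) vanishes on `ω` for all
`t > 0`, and no nonzero linear combination within one eigenspace vanishes identically
on `ω`, then all coefficients `a_{n,k}` vanish. -/
theorem eigenmode_coefficients_vanish
    (d : ℕ) (Ω ω : Set (Fin d → ℝ)) (hω : ω ⊆ Ω)
    (lam : ℕ → ℝ) (hlam : StrictMono lam) (hlamtop : Tendsto lam atTop atTop)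
    (μ : ℕ → ℕ) (hμ₀ : μ 0 = 1)
    (φ : (m : ℕ) → Fin (μ m) → (Fin d → ℝ) → ℝ)
    (a : (m : ℕ) → Fin (μ m) → ℝ)
    (ha : Summable (fun p : Σ m : ℕ, Fin (μ m) => (a p.1 p.2) ^ 2))
    (hsum : ∀ t : ℝ, 0 < t → ∀ x ∈ Ω,
      Summable (fun p : Σ m : ℕ, Fin (μ m) =>
        a p.1 p.2 * Real.exp (-(lam p.1) * t) * φ p.1 p.2 x))
    (hvanish : ∀ t : ℝ, 0 < t → ∀ x ∈ ω,
      (∑' p : Σ m : ℕ, Fin (μ m), a p.1 p.2 * Real.exp (-(lam p.1) * t) * φ p.1 p.2 x) = 0)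
    (hunique : ∀ m : ℕ, ∀ b : Fin (μ m) → ℝ,
      (∀ x ∈ ω, ∑ k, b k * φ m k x = 0) → ∀ k, b k = 0) :
    ∀ m k, a m k = 0 := by
  suffices key : ∀ m, ∀ x ∈ ω, ∑ k, a m k * φ m k x = 0 by
    intro m k
    exact hunique m (a m) (key m) k
  intro m
  induction m using Nat.strong_induction_on with
  | _ m IH =>
    intro x hx
    have hx' : x ∈ Ω := hω hx
    set A : ℕ → ℝ := fun n => ∑ k, a n k * φ n k x with hA
    show A m = 0
    -- reduce the sigma-indexed series to a series over ℕ of grouped terms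
    have claim : ∀ t : ℝ, 0 < t →
        Summable (fun n => A n * Real.exp (-(lam n) * t)) ∧
        (∑' n, A n * Real.exp (-(lam n) * t)) = 0 := by
      intro t ht
      have hS := hsum t ht x hx'
      have hfval : ∀ n : ℕ,
          (∑' k : Fin (μ n), a n k * Real.exp (-(lam n) * t) * φ n k x)
            = A n * Real.exp (-(lam n) * t) := by
        intro n
        rw [tsum_fintype, hA, Finset.sum_mul]
        exact Finset.sum_congr rfl (fun k _ => by ring)
      constructor
      · exact (hS.sigma).congr hfval
      · have h0 := hvanish t ht x hx
        rw [Summable.tsum_sigma hS] at h0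
        calc (∑' n, A n * Real.exp (-(lam n) * t))
            = ∑' (n : ℕ) (k : Fin (μ n)),
                a n k * Real.exp (-(lam n) * t) * φ n k x := by
              exact tsum_congr fun n => (hfval n).symm
          _ = 0 := h0
    -- terms below m vanish by induction
    have hAlow : ∀ n < m, A n = 0 := fun n hn => IH n hn x hx
    -- set up constants
    set δ : ℝ := lam (m + 1) - lam m with hδ
    have hδpos : 0 < δ := sub_pos.mpr (hlam (Nat.lt_succ_self m))
    -- the comparison series at time 1
    have hS1 : Summable (fun n => A n * Real.exp (-(lam n) * 1)) := (claim 1 one_pos).1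
    set B : ℕ → ℝ := fun n => |A n * Real.exp (-(lam n) * 1)| * Real.exp (lam m) with hB
    have hBsum : Summable B := (summable_abs_iff.mpr hS1).mul_right _
    have hBnonneg : ∀ n, 0 ≤ B n := fun n =>
      mul_nonneg (abs_nonneg _) (Real.exp_pos _).le
    set SB : ℝ := ∑' n, B n with hSB
    -- the key bound for each natural time t = j + 1
    have hbound : ∀ j : ℕ, |A m| ≤ SB * Real.exp (-δ) ^ j := by
      intro j
      set t : ℝ := (j : ℝ) + 1 with htdef
      have ht : (0:ℝ) < t := by positivity
      obtain ⟨hsumm, hzero⟩ := claim t ht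
      have heq := Summable.tsum_eq_add_tsum_ite hsumm m
      rw [hzero] at heq
      -- A m * exp(-(lam m) t) = - ∑' ite
      have heq2 : A m * Real.exp (-(lam m) * t)
          = -(∑' n, if n = m then 0 else A n * Real.exp (-(lam n) * t)) := by
        linarith [heq]
      -- summability of the ite series
      have hgs : Summable (fun n => if n = m then (0:ℝ)
          else A n * Real.exp (-(lam n) * t)) := by
        have := hsumm.update m 0
        refine this.congr fun n => ?_
        rw [Function.update_apply]
      have hgabs : Summable (fun n => |if n = m then (0:ℝ)
          else A n * Real.exp (-(lam n) * t)|) := summable_abs_iff.mpr hgs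
      -- termwise bound
      have hterm : ∀ n, |if n = m then (0:ℝ) else A n * Real.exp (-(lam n) * t)|
          ≤ B n * Real.exp (-δ) ^ j * Real.exp (-(lam m) * t) := by
        intro n
        have hrhs_nonneg : 0 ≤ B n * Real.exp (-δ) ^ j * Real.exp (-(lam m) * t) := by
          have := hBnonneg n; positivity
        rcases eq_or_ne n m with rfl | hne
        · simpa using hrhs_nonneg
        · rw [if_neg hne]
          rcases lt_or_ge n m with hlt | hge
          · rw [hAlow n hlt]; simpa using hrhs_nonneg
          · have hge' : m + 1 ≤ n := lt_of_le_of_ne hge (Ne.symm hne)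
            have hlamge : lam (m + 1) ≤ lam n := hlam.monotone hge'
            -- |A n| e^{-λ_n t} ≤ |A n| e^{-λ_n} e^{λ_m} e^{-δ j} e^{-λ_m t}
            rw [abs_mul, abs_of_pos (Real.exp_pos _)]
            rw [hB]
            have hexp : Real.exp (-lam n * t)
                ≤ Real.exp (-(lam n) * 1) * Real.exp (lam m) *
                  Real.exp (-δ) ^ j * Real.exp (-(lam m) * t) := by
              rw [← Real.exp_nat_mul, ← Real.exp_add, ← Real.exp_add, ← Real.exp_add]
              apply Real.exp_le_exp.mpr
              have hj : (0:ℝ) ≤ (j:ℝ) := Nat.cast_nonneg j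
              have : lam m + δ ≤ lam n := by rw [hδ]; linarith
              have hmul : (lam m + δ) * (j:ℝ) ≤ lam n * (j:ℝ) :=
                mul_le_mul_of_nonneg_right this hj
              rw [htdef, hδ]
              nlinarith [hmul, hlamge, hj]
            calc |A n| * Real.exp (-lam n * t)
                ≤ |A n| * (Real.exp (-(lam n) * 1) * Real.exp (lam m) *
                    Real.exp (-δ) ^ j * Real.exp (-(lam m) * t)) :=
                  mul_le_mul_of_nonneg_left hexp (abs_nonneg _)
              _ = |A n * Real.exp (-(lam n) * 1)| * Real.exp (lam m) *
                    Real.exp (-δ) ^ j * Real.exp (-(lam m) * t) := by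
                  rw [abs_mul, abs_of_pos (Real.exp_pos _)]; ring
      -- combine
      have habs : |A m| * Real.exp (-(lam m) * t)
          ≤ SB * Real.exp (-δ) ^ j * Real.exp (-(lam m) * t) := by
        have h1 : |A m * Real.exp (-(lam m) * t)|
            = |A m| * Real.exp (-(lam m) * t) := by
          rw [abs_mul, abs_of_pos (Real.exp_pos _)]
        have h2 : |A m * Real.exp (-(lam m) * t)|
            ≤ ∑' n, |if n = m then (0:ℝ) else A n * Real.exp (-(lam n) * t)| := by
          rw [heq2, abs_neg]
          have := norm_tsum_le_tsum_norm (f := fun n =>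
            if n = m then (0:ℝ) else A n * Real.exp (-(lam n) * t))
            (by simpa [Real.norm_eq_abs] using hgabs)
          simpa [Real.norm_eq_abs] using this
        have h3 : (∑' n, |if n = m then (0:ℝ) else A n * Real.exp (-(lam n) * t)|)
            ≤ ∑' n, B n * Real.exp (-δ) ^ j * Real.exp (-(lam m) * t) :=
          Summable.tsum_le_tsum hterm hgabs (by
            exact (hBsum.mul_right _).mul_right _)
        have h4 : (∑' n, B n * Real.exp (-δ) ^ j * Real.exp (-(lam m) * t))
            = SB * Real.exp (-δ) ^ j * Real.exp (-(lam m) * t) := by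
          rw [hSB, ← tsum_mul_right, ← tsum_mul_right]
        linarith [h1 ▸ h2, h4 ▸ h3]
      exact le_of_mul_le_mul_right habs (Real.exp_pos _)
    -- conclude via the limit j → ∞
    have htend : Tendsto (fun j : ℕ => SB * Real.exp (-δ) ^ j) atTop (nhds 0) := by
      have h1 : Real.exp (-δ) < 1 := Real.exp_lt_one_iff.mpr (by linarith)
      have := (tendsto_pow_atTop_nhds_zero_of_lt_one (Real.exp_pos _).le h1).const_mul SB
      simpa using this
    have : |A m| ≤ 0 := ge_of_tendsto' htend hbound
    exact abs_nonpos_iff.mp this
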